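/- With the notation of the value-function difference identity, the remainder term satisfies ‖R‖∞ ≤ (γ/(1-γ))·‖Δ_P‖∞·‖γ(I-γP)⁻¹ Δ_P θ‖∞ + (γ/(1-γ)²)·‖Δ_P‖∞·‖Δ_r‖∞, where ‖M‖∞ denotes the maximum row ℓ₁-norm of a matrix M. Consequently, when r = r', one has ‖θ - θ'‖∞ ≥ (1 - γ‖Δ_P‖∞/(1-γ))₊ · ‖γ(I-γP)⁻¹ Δ_P θ‖∞. -/

import Mathlib

open Matrix BigOperators

/-- Maximum row `ℓ₁`-norm of a matrix (the `(1,∞)`-operator norm used in the paper). -/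
noncomputable def maxRowL1 {D : ℕ} (M : Matrix (Fin D) (Fin D) ℝ) : ℝ :=
  ⨆ i, ∑ j, |M i j|

lemma rowL1_le {D : ℕ} (M : Matrix (Fin D) (Fin D) ℝ) (i : Fin D) :
    ∑ j, |M i j| ≤ maxRowL1 M := by
  unfold maxRowL1
  exact le_ciSup (Set.Finite.bddAbove (Set.finite_range (fun i => ∑ j, |M i j|))) i

lemma maxRowL1_nonneg {D : ℕ} (M : Matrix (Fin D) (Fin D) ℝ) : 0 ≤ maxRowL1 M := by
  rcases Nat.eq_zero_or_pos D with h | h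
  · subst h
    simp [maxRowL1, Real.iSup_of_isEmpty]
  · exact le_trans (Finset.sum_nonneg fun j _ => abs_nonneg _) (rowL1_le M ⟨0, h⟩)

lemma norm_mulVec_le {D : ℕ} (M : Matrix (Fin D) (Fin D) ℝ) (v : Fin D → ℝ) :
    ‖M.mulVec v‖ ≤ maxRowL1 M * ‖v‖ := by
  rw [pi_norm_le_iff_of_nonneg (mul_nonneg (maxRowL1_nonneg M) (norm_nonneg v))]
  intro i
  have h : M.mulVec v i = ∑ j, M i j * v j := rfl
  rw [h, Real.norm_eq_abs]
  calc |∑ j, M i j * v j| ≤ ∑ j, |M i j * v j| := Finset.abs_sum_le_sum_abs _ _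
    _ ≤ ∑ j, |M i j| * ‖v‖ := by
        refine Finset.sum_le_sum fun j _ => ?_
        rw [abs_mul]
        exact mul_le_mul_of_nonneg_left (norm_le_pi_norm v j) (abs_nonneg _)
    _ = (∑ j, |M i j|) * ‖v‖ := (Finset.sum_mul _ _ _).symm
    _ ≤ maxRowL1 M * ‖v‖ := mul_le_mul_of_nonneg_right (rowL1_le M i) (norm_nonneg v)

lemma norm_stoch_mulVec_le {D : ℕ} (P : Matrix (Fin D) (Fin D) ℝ)
    (hP : ∀ i j, 0 ≤ P i j) (hProw : ∀ i, ∑ j, P i j = 1) (v : Fin D → ℝ) :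
    ‖P.mulVec v‖ ≤ ‖v‖ := by
  rw [pi_norm_le_iff_of_nonneg (norm_nonneg v)]
  intro i
  have h : P.mulVec v i = ∑ j, P i j * v j := rfl
  rw [h, Real.norm_eq_abs]
  calc |∑ j, P i j * v j| ≤ ∑ j, |P i j * v j| := Finset.abs_sum_le_sum_abs _ _
    _ ≤ ∑ j, P i j * ‖v‖ := by
        refine Finset.sum_le_sum fun j _ => ?_
        rw [abs_mul, abs_of_nonneg (hP i j)]
        exact mul_le_mul_of_nonneg_left (norm_le_pi_norm v j) (hP i j)
    _ = ‖v‖ := by rw [← Finset.sum_mul, hProw, one_mul]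

lemma resolvent_det_unit {D : ℕ} (P : Matrix (Fin D) (Fin D) ℝ)
    (hP : ∀ i j, 0 ≤ P i j) (hProw : ∀ i, ∑ j, P i j = 1)
    (γ : ℝ) (hγ0 : 0 ≤ γ) (hγ1 : γ < 1) :
    IsUnit (1 - γ • P).det := by
  rw [isUnit_iff_ne_zero]
  intro hdet
  obtain ⟨v, hv, hv0⟩ := (Matrix.exists_mulVec_eq_zero_iff).mpr hdet
  apply hv
  have h1 : (1 - γ • P).mulVec v = v - γ • P.mulVec v := by
    rw [Matrix.sub_mulVec, Matrix.one_mulVec, Matrix.smul_mulVec]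
  rw [h1, sub_eq_zero] at hv0
  have hle : ‖v‖ ≤ γ * ‖v‖ := by
    calc ‖v‖ = ‖γ • P.mulVec v‖ := by rw [← hv0]
      _ = γ * ‖P.mulVec v‖ := by rw [norm_smul, Real.norm_eq_abs, abs_of_nonneg hγ0]
      _ ≤ γ * ‖v‖ := mul_le_mul_of_nonneg_left (norm_stoch_mulVec_le P hP hProw v) hγ0
  have h2 : (1 - γ) * ‖v‖ ≤ 0 := by nlinarith
  have h3 : ‖v‖ ≤ 0 := nonpos_of_mul_nonpos_right h2 (by linarith)
  ext i
  exact norm_le_zero_iff.mp h3 ▸ rfl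

lemma norm_resolvent_mulVec_le {D : ℕ} (P : Matrix (Fin D) (Fin D) ℝ)
    (hP : ∀ i j, 0 ≤ P i j) (hProw : ∀ i, ∑ j, P i j = 1)
    (γ : ℝ) (hγ0 : 0 ≤ γ) (hγ1 : γ < 1) (v : Fin D → ℝ) :
    ‖(1 - γ • P)⁻¹.mulVec v‖ ≤ ‖v‖ / (1 - γ) := by
  have hdet := resolvent_det_unit P hP hProw γ hγ0 hγ1
  set u := (1 - γ • P)⁻¹.mulVec v with hu
  have key : (1 - γ • P).mulVec u = v := by
    rw [hu, Matrix.mulVec_mulVec, Matrix.mul_nonsing_inv _ hdet, Matrix.one_mulVec]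
  have h1 : v = u - γ • P.mulVec u := by
    rw [← key, Matrix.sub_mulVec, Matrix.one_mulVec, Matrix.smul_mulVec]
  have h2 : ‖u‖ ≤ ‖v‖ + γ * ‖u‖ := by
    calc ‖u‖ = ‖v + γ • P.mulVec u‖ := by rw [h1]; congr 1; abel
      _ ≤ ‖v‖ + ‖γ • P.mulVec u‖ := norm_add_le _ _
      _ ≤ ‖v‖ + γ * ‖u‖ := by
          rw [norm_smul, Real.norm_eq_abs, abs_of_nonneg hγ0]
          exact add_le_add le_rfl
            (mul_le_mul_of_nonneg_left (norm_stoch_mulVec_le P hP hProw u) hγ0)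
  rw [le_div_iff₀ (by linarith)]
  nlinarith

lemma inv_sub_inv_eq {D : ℕ} (A C : Matrix (Fin D) (Fin D) ℝ)
    (hA : IsUnit A.det) (hC : IsUnit C.det) :
    A⁻¹ - C⁻¹ = C⁻¹ * (C - A) * A⁻¹ := by
  rw [Matrix.mul_sub, Matrix.sub_mul, Matrix.nonsing_inv_mul _ hC, Matrix.mul_assoc,
    Matrix.mul_nonsing_inv _ hA, one_mul, mul_one]

theorem remainder_bound_and_lower_bound {D : ℕ}
    (P P' : Matrix (Fin D) (Fin D) ℝ)
    (hPnonneg : ∀ i j, 0 ≤ P i j) (hProw : ∀ i, ∑ j, P i j = 1)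
    (hP'nonneg : ∀ i j, 0 ≤ P' i j) (hP'row : ∀ i, ∑ j, P' i j = 1)
    (r r' : Fin D → ℝ) (γ : ℝ) (hγ0 : 0 ≤ γ) (hγ1 : γ < 1)
    (θ θ' : Fin D → ℝ) (R : Fin D → ℝ)
    (hθ : θ = (1 - γ • P)⁻¹.mulVec r)
    (hθ' : θ' = (1 - γ • P')⁻¹.mulVec r')
    (hR : R = γ ^ 2 • (1 - γ • P')⁻¹.mulVec
          ((P - P').mulVec ((1 - γ • P)⁻¹.mulVec ((P - P').mulVec θ)))
        + ((1 - γ • P)⁻¹ - (1 - γ • P')⁻¹).mulVec (r - r')) :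
    ‖R‖ ≤ γ / (1 - γ) * maxRowL1 (P - P')
            * ‖γ • (1 - γ • P)⁻¹.mulVec ((P - P').mulVec θ)‖
          + γ / (1 - γ) ^ 2 * maxRowL1 (P - P') * ‖r - r'‖ ∧
    (r = r' →
      ‖θ - θ'‖ ≥ max (1 - γ * maxRowL1 (P - P') / (1 - γ)) 0
        * ‖γ • (1 - γ • P)⁻¹.mulVec ((P - P').mulVec θ)‖) := by
  have h1γ : (0:ℝ) < 1 - γ := by linarith
  have hBdet := resolvent_det_unit P hPnonneg hProw γ hγ0 hγ1
  have hB'det := resolvent_det_unit P' hP'nonneg hP'row γ hγ0 hγ1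
  set B := (1 : Matrix (Fin D) (Fin D) ℝ) - γ • P with hB
  set B' := (1 : Matrix (Fin D) (Fin D) ℝ) - γ • P' with hB'
  set Δ := P - P' with hΔ
  set x := γ • B⁻¹.mulVec (Δ.mulVec θ) with hx
  set mΔ := maxRowL1 Δ with hmΔ
  have hmΔ0 : 0 ≤ mΔ := maxRowL1_nonneg Δ
  -- inverse difference identity
  have hdiff : B' - B = γ • Δ := by
    ext i j
    simp [hB, hB', hΔ, Matrix.sub_apply, Matrix.smul_apply, Matrix.one_apply]
    ring
  have hinv : B⁻¹ - B'⁻¹ = γ • (B'⁻¹ * Δ * B⁻¹) := by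
    rw [inv_sub_inv_eq B B' hBdet hB'det, hdiff, Matrix.mul_smul, Matrix.smul_mul]
  -- first-term bound (reused in both parts)
  have hT1 : ‖γ • B'⁻¹.mulVec (Δ.mulVec x)‖ ≤ γ / (1 - γ) * mΔ * ‖x‖ := by
    calc ‖γ • B'⁻¹.mulVec (Δ.mulVec x)‖ = γ * ‖B'⁻¹.mulVec (Δ.mulVec x)‖ := by
          rw [norm_smul, Real.norm_eq_abs, abs_of_nonneg hγ0]
      _ ≤ γ * (‖Δ.mulVec x‖ / (1 - γ)) := by
          exact mul_le_mul_of_nonneg_left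
            (norm_resolvent_mulVec_le P' hP'nonneg hP'row γ hγ0 hγ1 _) hγ0
      _ ≤ γ * (mΔ * ‖x‖ / (1 - γ)) := by
          apply mul_le_mul_of_nonneg_left _ hγ0
          exact div_le_div_of_nonneg_right (norm_mulVec_le Δ x) h1γ.le |>.trans_eq rfl
      _ = γ / (1 - γ) * mΔ * ‖x‖ := by field_simp
  -- rewrite R
  have hRrw : R = γ • B'⁻¹.mulVec (Δ.mulVec x)
      + γ • B'⁻¹.mulVec (Δ.mulVec (B⁻¹.mulVec (r - r'))) := by
    rw [hR]
    congr 1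
    · rw [hx, Matrix.mulVec_smul, Matrix.mulVec_smul, smul_smul, ← pow_two]
    · rw [hinv, Matrix.smul_mulVec, ← Matrix.mulVec_mulVec, ← Matrix.mulVec_mulVec]
  constructor
  · -- part 1
    have hT2 : ‖γ • B'⁻¹.mulVec (Δ.mulVec (B⁻¹.mulVec (r - r')))‖
        ≤ γ / (1 - γ) ^ 2 * mΔ * ‖r - r'‖ := by
      have s1 : ‖B⁻¹.mulVec (r - r')‖ ≤ ‖r - r'‖ / (1 - γ) :=
        norm_resolvent_mulVec_le P hPnonneg hProw γ hγ0 hγ1 _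
      have s2 : ‖Δ.mulVec (B⁻¹.mulVec (r - r'))‖ ≤ mΔ * (‖r - r'‖ / (1 - γ)) :=
        (norm_mulVec_le Δ _).trans (mul_le_mul_of_nonneg_left s1 hmΔ0)
      have s3 : ‖B'⁻¹.mulVec (Δ.mulVec (B⁻¹.mulVec (r - r')))‖
          ≤ mΔ * (‖r - r'‖ / (1 - γ)) / (1 - γ) :=
        (norm_resolvent_mulVec_le P' hP'nonneg hP'row γ hγ0 hγ1 _).trans
          (div_le_div_of_nonneg_right s2 h1γ.le)
      calc ‖γ • B'⁻¹.mulVec (Δ.mulVec (B⁻¹.mulVec (r - r')))‖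
          = γ * ‖B'⁻¹.mulVec (Δ.mulVec (B⁻¹.mulVec (r - r')))‖ := by
            rw [norm_smul, Real.norm_eq_abs, abs_of_nonneg hγ0]
        _ ≤ γ * (mΔ * (‖r - r'‖ / (1 - γ)) / (1 - γ)) :=
            mul_le_mul_of_nonneg_left s3 hγ0
        _ = γ / (1 - γ) ^ 2 * mΔ * ‖r - r'‖ := by field_simp
    calc ‖R‖ ≤ ‖γ • B'⁻¹.mulVec (Δ.mulVec x)‖
        + ‖γ • B'⁻¹.mulVec (Δ.mulVec (B⁻¹.mulVec (r - r')))‖ := by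
          rw [hRrw]; exact norm_add_le _ _
      _ ≤ γ / (1 - γ) * mΔ * ‖x‖ + γ / (1 - γ) ^ 2 * mΔ * ‖r - r'‖ := add_le_add hT1 hT2
  · -- part 2
    intro hrr'
    subst hrr'
    have hθθ' : θ - θ' = γ • B'⁻¹.mulVec (Δ.mulVec θ) := by
      rw [hθ, hθ', ← Matrix.sub_mulVec, hinv, Matrix.smul_mulVec,
        ← Matrix.mulVec_mulVec, ← Matrix.mulVec_mulVec, ← hθ]
    have hxdiff : x - (θ - θ') = γ • B'⁻¹.mulVec (Δ.mulVec x) := by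
      rw [hθθ', hx, Matrix.mulVec_smul, Matrix.mulVec_smul, ← smul_sub,
        ← Matrix.sub_mulVec, hinv, Matrix.smul_mulVec,
        ← Matrix.mulVec_mulVec, ← Matrix.mulVec_mulVec, smul_comm]
    have hlow : ‖x‖ - γ / (1 - γ) * mΔ * ‖x‖ ≤ ‖θ - θ'‖ := by
      have := norm_sub_norm_le x (θ - θ')
      rw [hxdiff] at this
      linarith [hT1]
    rcases le_total (1 - γ * mΔ / (1 - γ)) 0 with hc | hc
    · rw [max_eq_right hc, zero_mul]
      exact norm_nonneg _
    · rw [max_eq_left hc]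
      have heq : (1 - γ * mΔ / (1 - γ)) * ‖x‖ = ‖x‖ - γ / (1 - γ) * mΔ * ‖x‖ := by
        ring
      rw [ge_iff_le, heq]
      exact hlow
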